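/- For any Borel probability measure μ on ℝ, the function κ ↦ pd(μ; 1 - κ) on (0,1) is right-continuous, where pd(μ; 1-κ) is the infimum of diam(I) over Borel sets I ⊆ ℝ with μ(I) ≥ 1 - κ. -/

import Mathlib

open MeasureTheory Set Filter
open scoped ENNReal Topology

/-- The `α`-partial diameter of a Borel measure on `ℝ`:
`inf { diam I : I Borel, μ I ≥ α }`. -/
noncomputable def partialDiam (μ : Measure ℝ) (α : ℝ) : ℝ≥0∞ :=
  ⨅ I ∈ {I : Set ℝ | MeasurableSet I ∧ ENNReal.ofReal α ≤ μ I}, EMetric.diam I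

lemma partialDiam_mono (μ : Measure ℝ) : Monotone (partialDiam μ) := by
  intro a b hab
  refine le_iInf₂ fun I hI => ?_
  exact iInf₂_le I ⟨hI.1, le_trans (ENNReal.ofReal_le_ofReal hab) hI.2⟩

lemma partialDiam_key (μ : Measure ℝ) [IsProbabilityMeasure μ] {κ : ℝ}
    (hκ0 : 0 < κ) (hκ1 : κ < 1) :
    partialDiam μ (1 - κ) ≤ ⨆ κ' ∈ Ioi κ, partialDiam μ (1 - κ') := by
  set L := ⨆ κ' ∈ Ioi κ, partialDiam μ (1 - κ') with hL
  refine le_of_forall_gt_imp_ge_of_dense fun d hd => ?_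
  rcases eq_or_ne d ⊤ with rfl | hdt
  · exact le_top
  set r := d.toReal with hr
  have hr0 : 0 ≤ r := ENNReal.toReal_nonneg
  have hdr : d = ENNReal.ofReal r := (ENNReal.ofReal_toReal hdt).symm
  -- the approximating sequence κₙ ↓ κ
  set k : ℕ → ℝ := fun n => κ + (1 - κ) / (n + 2) with hk
  have hn2 : ∀ n : ℕ, (0:ℝ) < (n:ℝ) + 2 := fun n => by positivity
  have hk_gt : ∀ n, κ < k n := fun n => by
    have : (0:ℝ) < (1 - κ) / (n + 2) := div_pos (by linarith) (hn2 n)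
    simp [hk]; linarith
  have hk_lt1 : ∀ n, k n < 1 := fun n => by
    have h2 : (1:ℝ) < (n:ℝ) + 2 := by have := Nat.cast_nonneg (α := ℝ) n; linarith
    have : (1 - κ) / (n + 2) < 1 - κ := by
      rw [div_lt_iff₀ (hn2 n)]
      nlinarith
    simp [hk]; linarith
  have hk_le : ∀ n, k n ≤ (1 + κ) / 2 := fun n => by
    have h2 : (2:ℝ) ≤ (n:ℝ) + 2 := by have := Nat.cast_nonneg (α := ℝ) n; linarith
    have : (1 - κ) / (n + 2) ≤ (1 - κ) / 2 :=
      div_le_div_of_nonneg_left (by linarith) (by norm_num) h2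
    simp only [hk]; linarith
  have hk_tendsto : Tendsto k atTop (𝓝 κ) := by
    have h1 : Tendsto (fun n : ℕ => (1 - κ) / (n + 2)) atTop (𝓝 0) := by
      apply Tendsto.div_atTop tendsto_const_nhds
      exact tendsto_atTop_add_const_right _ 2 tendsto_natCast_atTop_atTop
    have := h1.const_add κ
    simpa [hk] using this
  -- for each n, find an interval [a n, a n + r] of mass ≥ 1 - k n
  have hIn : ∀ n : ℕ, ∃ a : ℝ, ENNReal.ofReal (1 - k n) ≤ μ (Icc a (a + r)) := by
    intro n
    have hlt : partialDiam μ (1 - k n) < d := by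
      refine lt_of_le_of_lt ?_ hd
      exact le_iSup₂_of_le (k n) (hk_gt n) le_rfl
    rw [partialDiam] at hlt
    simp only [iInf_lt_iff] at hlt
    obtain ⟨I, ⟨hImeas, hIμ⟩, hId⟩ := hlt
    have hIne : I.Nonempty := by
      apply nonempty_of_measure_ne_zero (μ := μ)
      have hpos : (0:ℝ≥0∞) < ENNReal.ofReal (1 - k n) :=
        ENNReal.ofReal_pos.2 (by linarith [hk_lt1 n])
      exact (lt_of_lt_of_le hpos hIμ).ne'
    have hIb : Bornology.IsBounded I := by
      rw [Metric.isBounded_iff_ediam_ne_top]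
      exact hId.ne_top
    have hIbdd : BddBelow I := hIb.bddBelow
    have hdiam : ∀ x ∈ I, ∀ y ∈ I, dist x y ≤ r := by
      intro x hx y hy
      have := EMetric.edist_le_diam_of_mem hx hy
      have h2 : edist x y ≤ ENNReal.ofReal r := this.trans (hdr ▸ hId.le)
      rwa [edist_dist, ENNReal.ofReal_le_ofReal_iff hr0] at h2
    refine ⟨sInf I, le_trans hIμ (measure_mono fun y hy => ?_)⟩
    constructor
    · exact csInf_le hIbdd hy
    · have : y - r ≤ sInf I := by
        refine le_csInf hIne fun z hz => ?_
        have := hdiam y hy z hz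
        rw [Real.dist_eq] at this
        have := abs_le.1 this
        linarith [this.1, this.2]
      linarith
  choose a ha using hIn
  -- a bounding window
  have hc1 : ENNReal.ofReal ((1 + κ) / 2) < 1 := ENNReal.ofReal_lt_one.2 (by linarith)
  obtain ⟨M, hM⟩ : ∃ M : ℕ, ENNReal.ofReal ((1 + κ) / 2) < μ (Icc (-(M:ℝ)) M) := by
    have hmono : Monotone fun n : ℕ => Icc (-(n:ℝ)) n := fun m n hmn =>
      Icc_subset_Icc (by simp; exact_mod_cast hmn) (by exact_mod_cast hmn)
    have hunion : (⋃ n : ℕ, Icc (-(n:ℝ)) n) = univ := by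
      ext x; simp only [mem_iUnion, mem_Icc, mem_univ, iff_true]
      obtain ⟨n, hn⟩ := exists_nat_gt |x|
      exact ⟨n, by have h := abs_le.1 hn.le; exact ⟨by linarith [h.1], by linarith [h.2]⟩⟩
    have := tendsto_measure_iUnion_atTop (μ := μ) hmono
    rw [hunion, measure_univ] at this
    have hev := this.eventually_const_lt hc1
    exact hev.exists
  -- the a n are confined to a compact interval
  have haM : ∀ n, a n ∈ Icc (-(M:ℝ) - r) M := by
    intro n
    by_contra hcon
    have hdisj : Disjoint (Icc (a n) (a n + r)) (Icc (-(M:ℝ)) M) := by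
      rw [Set.disjoint_iff]
      rintro x ⟨⟨h1, h2⟩, h3, h4⟩
      exact hcon ⟨by linarith, by linarith⟩
    have hsum : μ (Icc (a n) (a n + r)) + μ (Icc (-(M:ℝ)) M) ≤ 1 := by
      rw [← measure_union hdisj measurableSet_Icc]
      simpa using measure_mono (subset_univ _) |>.trans_eq (measure_univ (μ := μ))
    have h1 : ENNReal.ofReal (1 - k n) + ENNReal.ofReal ((1+κ)/2) <
        μ (Icc (a n) (a n + r)) + μ (Icc (-(M:ℝ)) M) :=
      ENNReal.add_lt_add_of_le_of_lt ENNReal.ofReal_ne_top (ha n) hM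
    have h2 : (1:ℝ≥0∞) ≤ ENNReal.ofReal (1 - k n) + ENNReal.ofReal ((1+κ)/2) := by
      rw [← ENNReal.ofReal_add (by linarith [hk_lt1 n]) (by linarith)]
      rw [← ENNReal.ofReal_one]
      apply ENNReal.ofReal_le_ofReal
      linarith [hk_le n]
    exact absurd (h2.trans_lt h1) (not_lt.2 hsum)
  -- extract a convergent subsequence
  obtain ⟨b, -, φ, hφ, hba⟩ := (isCompact_Icc (a := -(M:ℝ) - r) (b := M)).tendsto_subseq haM
  -- the limiting interval [b, b + r] has mass ≥ 1 - κ
  have hmain : ENNReal.ofReal (1 - κ) ≤ μ (Icc b (b + r)) := by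
    have hIcc_eq : Icc b (b + r) = ⋂ m : ℕ, Icc (b - 1/(m+1)) (b + r + 1/(m+1)) := by
      ext x
      simp only [mem_iInter, mem_Icc]
      constructor
      · rintro ⟨h1, h2⟩ m
        have : (0:ℝ) < 1/(m+1) := by positivity
        constructor <;> linarith
      · intro h
        constructor
        · by_contra hbx
          push_neg at hbx
          obtain ⟨m, hm⟩ := exists_nat_one_div_lt (show (0:ℝ) < b - x by linarith)
          linarith [(h m).1]
        · by_contra hbx
          push_neg at hbx
          obtain ⟨m, hm⟩ := exists_nat_one_div_lt (show (0:ℝ) < x - (b + r) by linarith)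
          linarith [(h m).2]
    have hanti : Antitone fun m : ℕ => Icc (b - 1/(m+1)) (b + r + 1/(m+1)) := by
      intro p q hpq
      have h1 : (1:ℝ)/(q+1) ≤ 1/(p+1) := by
        apply div_le_div_of_nonneg_left (by norm_num) (by positivity)
        exact_mod_cast add_le_add_left (Nat.cast_le.2 hpq) 1
      exact Icc_subset_Icc (by linarith) (by linarith)
    have htm := tendsto_measure_iInter_atTop (μ := μ)
      (fun m => measurableSet_Icc.nullMeasurableSet) hanti
      ⟨0, measure_ne_top μ _⟩
    rw [← hIcc_eq] at htm
    refine ge_of_tendsto htm (Eventually.of_forall fun m => ?_)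
    show ENNReal.ofReal (1 - κ) ≤ μ (Icc (b - 1/(m+1)) (b + r + 1/(m+1)))
    -- show each fattened interval has mass ≥ 1 - κ
    have hε : (0:ℝ) < 1/(m+1) := by positivity
    have hsub : Tendsto (fun j => k (φ j)) atTop (𝓝 κ) :=
      hk_tendsto.comp hφ.tendsto_atTop
    have hof : Tendsto (fun j => ENNReal.ofReal (1 - k (φ j))) atTop
        (𝓝 (ENNReal.ofReal (1 - κ))) :=
      (ENNReal.continuous_ofReal.tendsto _).comp (tendsto_const_nhds.sub hsub)
    refine le_of_tendsto hof ?_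
    have hev : ∀ᶠ j in atTop, |a (φ j) - b| < 1/(m+1) := by
      have := hba
      rw [Metric.tendsto_atTop] at this
      obtain ⟨N, hN⟩ := this _ hε
      exact eventually_atTop.2 ⟨N, fun j hj => by
        simpa [Real.dist_eq, Function.comp] using hN j hj⟩
    filter_upwards [hev] with j hj
    refine le_trans (ha (φ j)) (measure_mono fun y hy => ?_)
    obtain ⟨h1, h2⟩ := hy
    have := abs_lt.1 hj
    exact ⟨by linarith [this.1, this.2], by linarith [this.1, this.2]⟩
  -- conclude
  calc partialDiam μ (1 - κ) ≤ EMetric.diam (Icc b (b + r)) :=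
        iInf₂_le (Icc b (b + r)) ⟨measurableSet_Icc, hmain⟩
    _ = d := by rw [show EMetric.diam (Icc b (b + r)) = Metric.ediam (Icc b (b + r)) from rfl, Real.ediam_Icc, hdr]; ring_nf

theorem partialDiam_right_continuous (μ : Measure ℝ) [IsProbabilityMeasure μ]
    (κ : ℝ) (hκ : κ ∈ Set.Ioo (0 : ℝ) 1) :
    Tendsto (fun κ' : ℝ => partialDiam μ (1 - κ')) (𝓝[>] κ)
      (𝓝 (partialDiam μ (1 - κ))) := by
  have hanti : Antitone fun κ' : ℝ => partialDiam μ (1 - κ') := fun x y hxy =>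
    partialDiam_mono μ (by linarith)
  have h := hanti.tendsto_nhdsGT κ
  have heq : sSup ((fun κ' : ℝ => partialDiam μ (1 - κ')) '' Ioi κ)
      = partialDiam μ (1 - κ) := by
    rw [sSup_image]
    refine le_antisymm ?_ (partialDiam_key μ hκ.1 hκ.2)
    exact iSup₂_le fun κ' hκ' => hanti hκ'.le
  rwa [heq] at h
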